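/- Work in ℝᵐ with the Euclidean norm. Let Ψ, ψ : ℝᵐ → ℝ be convex and differentiable with ∇Ψ Lipschitz of constant L_F and ∇ψ Lipschitz of constant L_f. Let Y ⊆ ℝᵐ be nonempty, compact and convex, s_u ∈ (0, 1/L_F), s_l ∈ (0, 1/L_f), μ ∈ (0,1), α_k = 1/(k+1), and β_k ∈ [β̲, 1] with β̲ > 0 and |β_k − β_{k−1}| ≤ c_β/(k+1)² for some c_β > 0. Starting from y₀ ∈ Y, define y_{k+1} = Proj_Y( y_k − ( μ α_k s_u ∇Ψ(y_k) + (1−μ) β_k s_l ∇ψ(y_k) ) ), z^u_{k+1} = y_k − s_u α_k ∇Ψ(y_k), z^l_{k+1} = y_k − s_l β_k ∇ψ(y_k). Let D = sup_{y,y'∈Y} ‖y − y'‖, M_F = sup_{y∈Y} ‖∇Ψ(y)‖, M_f = sup_{y∈Y} ‖∇ψ(y)‖. Then for every k ≥ 1: ‖y_{k+1} − y_k‖² ≤ ‖y_k − y_{k−1}‖² + (μ/(k+1)²) ‖y_{k−1} − z^u_k‖² + 2(1−μ) s_l c_β D M_f /(k+1)² + 2 μ s_u D M_F /(k(k+1))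 + ((1−μ) c_β² / (β̲² (k+1)⁴)) ‖y_{k−1} − z^l_k‖². -/

import Mathlib

open Filter Topology Set Metric
open scoped RealInnerProductSpace

section helpers

variable {E : Type*} [NormedAddCommGroup E] [InnerProductSpace ℝ E] [CompleteSpace E]

lemma my_hasDerivAt_line {f : E → ℝ} {f' : E → E}
    (hgrad : ∀ x, HasGradientAt f (f' x) x) (a v : E) (t : ℝ) :
    HasDerivAt (fun s : ℝ => f (a + s • v)) ⟪f' (a + t • v), v⟫ t := by
  have hc : HasDerivAt (fun s : ℝ => a + s • v) v t := by
    simpa using ((hasDerivAt_id t).smul_const v).const_add a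
  have := ((hgrad (a + t • v)).hasFDerivAt).comp_hasDerivAt t hc
  simpa [InnerProductSpace.toDual_apply_apply, Function.comp_def] using this

lemma my_grad_ineq {f : E → ℝ} {f' : E → E} (hconv : ConvexOn ℝ univ f)
    (hgrad : ∀ x, HasGradientAt f (f' x) x) (a b : E) :
    f a + ⟪f' a, b - a⟫ ≤ f b := by
  have hline := my_hasDerivAt_line hgrad a (b - a) 0
  rw [show a + (0:ℝ) • (b - a) = a by simp] at hline
  have hslope := hasDerivAt_iff_tendsto_slope.mp hline
  have htend : Tendsto (slope (fun s : ℝ => f (a + s • (b - a))) 0) (𝓝[>] (0:ℝ))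
      (𝓝 ⟪f' a, b - a⟫) :=
    hslope.mono_left (nhdsWithin_mono _ (fun x hx => ne_of_gt hx))
  have key : ∀ᶠ t in 𝓝[>] (0:ℝ),
      slope (fun s : ℝ => f (a + s • (b - a))) 0 t ≤ f b - f a := by
    filter_upwards [Ioo_mem_nhdsGT_of_mem (Set.mem_Ico.mpr ⟨le_refl (0:ℝ), zero_lt_one⟩)]
      with t ht
    have hcomb : f ((1 - t) • a + t • b) ≤ (1 - t) * f a + t * f b :=
      hconv.2 (Set.mem_univ a) (Set.mem_univ b) (by linarith [ht.2]) (le_of_lt ht.1) (by ring)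
    have hpt : a + t • (b - a) = (1 - t) • a + t • b := by
      rw [smul_sub, sub_smul, one_smul]; abel
    rw [slope_def_field]
    simp only [sub_zero]
    rw [div_le_iff₀ ht.1, hpt]
    rw [show a + (0:ℝ) • (b - a) = a by simp]
    nlinarith [hcomb]
  have := le_of_tendsto htend key
  linarith

lemma my_descent {f : E → ℝ} {f' : E → E} {L : ℝ} (hL : 0 ≤ L)
    (hgrad : ∀ x, HasGradientAt f (f' x) x)
    (hlip : ∀ a b, ‖f' a - f' b‖ ≤ L * ‖a - b‖) (a b : E) :
    f b ≤ f a + ⟪f' a, b - a⟫ + L / 2 * ‖b - a‖ ^ 2 := by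
  set C : ℝ := ⟪f' a, b - a⟫ with hC
  set K : ℝ := L / 2 * ‖b - a‖ ^ 2 with hK
  set g : ℝ → ℝ := fun t => f (a + t • (b - a)) - t * C - K * t ^ 2 with hg
  have hder : ∀ t : ℝ, HasDerivAt g
      (⟪f' (a + t • (b - a)), b - a⟫ - C - K * (2 * t)) t := by
    intro t
    have h1 := my_hasDerivAt_line hgrad a (b - a) t
    have h2 : HasDerivAt (fun t : ℝ => t * C) C t := hasDerivAt_mul_const C
    have h3 : HasDerivAt (fun t : ℝ => K * t ^ 2) (K * (2 * t)) t := by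
      simpa using (hasDerivAt_pow 2 t).const_mul K
    exact (h1.sub h2).sub h3
  have hcont : Continuous g :=
    continuous_iff_continuousAt.mpr fun t => (hder t).differentiableAt.continuousAt
  have hanti : AntitoneOn g (Icc (0:ℝ) 1) := by
    apply antitoneOn_of_deriv_nonpos (convex_Icc 0 1) hcont.continuousOn
    · intro x hx
      exact (hder x).differentiableAt.differentiableWithinAt
    · intro x hx
      rw [interior_Icc] at hx
      rw [(hder x).deriv]
      have hinner : ⟪f' (a + x • (b - a)), b - a⟫ - C
          = ⟪f' (a + x • (b - a)) - f' a, b - a⟫ := by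
        rw [inner_sub_left]
      have hb1 : ⟪f' (a + x • (b - a)) - f' a, b - a⟫
          ≤ ‖f' (a + x • (b - a)) - f' a‖ * ‖b - a‖ := real_inner_le_norm _ _
      have hb2 : ‖f' (a + x • (b - a)) - f' a‖ ≤ L * (x * ‖b - a‖) := by
        have := hlip (a + x • (b - a)) a
        simpa [norm_smul, abs_of_pos hx.1] using this
      have hnn : (0:ℝ) ≤ ‖b - a‖ := norm_nonneg _
      rw [hinner]
      have : ⟪f' (a + x • (b - a)) - f' a, b - a⟫ ≤ L * x * ‖b - a‖ ^ 2 := by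
        calc ⟪f' (a + x • (b - a)) - f' a, b - a⟫
            ≤ ‖f' (a + x • (b - a)) - f' a‖ * ‖b - a‖ := hb1
          _ ≤ L * (x * ‖b - a‖) * ‖b - a‖ := by
              apply mul_le_mul_of_nonneg_right hb2 hnn
          _ = L * x * ‖b - a‖ ^ 2 := by ring
      rw [hK]
      nlinarith [this]
  have h10 : g 1 ≤ g 0 :=
    hanti (Set.mem_Icc.mpr ⟨le_refl 0, zero_le_one⟩)
      (Set.mem_Icc.mpr ⟨zero_le_one, le_refl 1⟩) zero_le_one
  have hg0 : g 0 = f a := by simp [hg]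
  have hg1 : g 1 = f b - C - K := by simp [hg]
  rw [hg0, hg1] at h10
  linarith

lemma my_coco_key {f : E → ℝ} {f' : E → E} {L : ℝ} (hL : 0 < L)
    (hconv : ConvexOn ℝ univ f) (hgrad : ∀ x, HasGradientAt f (f' x) x)
    (hlip : ∀ a b, ‖f' a - f' b‖ ≤ L * ‖a - b‖) (a b : E) :
    f b + ⟪f' b, a - b⟫ + 1 / (2 * L) * ‖f' a - f' b‖ ^ 2 ≤ f a := by
  set G : E := f' a - f' b with hG
  set x : E := a - (1 / L) • G with hx
  have h1 : f b + ⟪f' b, x - b⟫ ≤ f x := my_grad_ineq hconv hgrad b x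
  have h2 : f x ≤ f a + ⟪f' a, x - a⟫ + L / 2 * ‖x - a‖ ^ 2 :=
    my_descent (le_of_lt hL) hgrad hlip a x
  have hxa : x - a = -((1 / L) • G) := by rw [hx]; abel
  have hinner_a : ⟪f' a, x - a⟫ = -(1 / L * ⟪f' a, G⟫) := by
    rw [hxa, inner_neg_right, real_inner_smul_right]
  have hnorm_xa : ‖x - a‖ ^ 2 = (1 / L) ^ 2 * ‖G‖ ^ 2 := by
    rw [hxa, norm_neg, norm_smul, mul_pow]
    congr 1
    rw [Real.norm_eq_abs, abs_of_pos (by positivity), sq]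
  have hxb : x - b = (a - b) - (1 / L) • G := by rw [hx]; abel
  have hinner_b : ⟪f' b, x - b⟫ = ⟪f' b, a - b⟫ - 1 / L * ⟪f' b, G⟫ := by
    rw [hxb, inner_sub_right, real_inner_smul_right]
  have hGG : ⟪f' a, G⟫ - ⟪f' b, G⟫ = ‖G‖ ^ 2 := by
    rw [← inner_sub_left, ← hG, real_inner_self_eq_norm_sq]
  rw [hinner_a, hnorm_xa] at h2
  rw [hinner_b] at h1
  have hL' : L / 2 * ((1 / L) ^ 2 * ‖G‖ ^ 2) = 1 / (2 * L) * ‖G‖ ^ 2 := by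
    field_simp
  rw [hL'] at h2
  have key : 1 / L * ⟪f' a, G⟫ - 1 / L * ⟪f' b, G⟫ = 1 / L * ‖G‖ ^ 2 := by
    rw [← mul_sub, hGG]
  have h2L : 1 / L * ‖G‖ ^ 2 - 1 / (2 * L) * ‖G‖ ^ 2 = 1 / (2 * L) * ‖G‖ ^ 2 := by
    field_simp; ring
  linarith

lemma my_coco {f : E → ℝ} {f' : E → E} {L : ℝ} (hL : 0 < L)
    (hconv : ConvexOn ℝ univ f) (hgrad : ∀ x, HasGradientAt f (f' x) x)
    (hlip : ∀ a b, ‖f' a - f' b‖ ≤ L * ‖a - b‖) (a b : E) :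
    1 / L * ‖f' a - f' b‖ ^ 2 ≤ ⟪f' a - f' b, a - b⟫ := by
  have h1 := my_coco_key hL hconv hgrad hlip a b
  have h2 := my_coco_key hL hconv hgrad hlip b a
  rw [norm_sub_rev] at h2
  have hswap : ⟪f' a, b - a⟫ = -⟪f' a, a - b⟫ := by
    rw [show b - a = -(a - b) by abel, inner_neg_right]
  have hsplit : ⟪f' a - f' b, a - b⟫ = ⟪f' a, a - b⟫ - ⟪f' b, a - b⟫ :=
    inner_sub_left _ _ _
  rw [hswap] at h2
  have hhalf : 1 / (2 * L) * ‖f' a - f' b‖ ^ 2 + 1 / (2 * L) * ‖f' a - f' b‖ ^ 2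
      = 1 / L * ‖f' a - f' b‖ ^ 2 := by field_simp; ring
  linarith

end helpers

section helpers2

variable {E : Type*} [NormedAddCommGroup E] [InnerProductSpace ℝ E] [CompleteSpace E]

open scoped RealInnerProductSpace

lemma my_sq_le_sq {x y : ℝ} (hx : 0 ≤ x) (hy : 0 ≤ y) (h : x ^ 2 ≤ y ^ 2) : x ≤ y := by
  nlinarith

lemma my_step_nonexp {f : E → ℝ} {f' : E → E} {L : ℝ} (hL : 0 < L)
    (hconv : ConvexOn ℝ univ f) (hgrad : ∀ x, HasGradientAt f (f' x) x)
    (hlip : ∀ a b, ‖f' a - f' b‖ ≤ L * ‖a - b‖)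
    {t : ℝ} (ht0 : 0 ≤ t) (htL : t * L ≤ 2) (a b : E) :
    ‖(a - t • f' a) - (b - t • f' b)‖ ≤ ‖a - b‖ := by
  have hrw : (a - t • f' a) - (b - t • f' b) = (a - b) - t • (f' a - f' b) := by
    rw [smul_sub]; abel
  rw [hrw]
  apply my_sq_le_sq (norm_nonneg _) (norm_nonneg _)
  have hexp : ‖(a - b) - t • (f' a - f' b)‖ ^ 2
      = ‖a - b‖ ^ 2 - 2 * (t * ⟪a - b, f' a - f' b⟫) + t ^ 2 * ‖f' a - f' b‖ ^ 2 := by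
    rw [norm_sub_sq_real, real_inner_smul_right, norm_smul, mul_pow, Real.norm_eq_abs,
      sq_abs]
  rw [hexp]
  have hco := my_coco hL hconv hgrad hlip a b
  rw [real_inner_comm] at hco
  have hG : (0:ℝ) ≤ ‖f' a - f' b‖ ^ 2 := sq_nonneg _
  have hinn : (0:ℝ) ≤ ⟪a - b, f' a - f' b⟫ := le_trans (by positivity) hco
  have hco' : ‖f' a - f' b‖ ^ 2 ≤ L * ⟪a - b, f' a - f' b⟫ := by
    have := mul_le_mul_of_nonneg_left hco (le_of_lt hL)
    rw [show L * (1 / L * ‖f' a - f' b‖ ^ 2) = ‖f' a - f' b‖ ^ 2 by field_simp] at this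
    exact this
  have h2tl : (0:ℝ) ≤ 2 - t * L := by linarith
  nlinarith [mul_le_mul_of_nonneg_left (mul_le_mul_of_nonneg_left hco' ht0) ht0,
    mul_nonneg (mul_nonneg ht0 hinn) h2tl]

lemma my_proj_inner {Y : Set E} (hYconv : Convex ℝ Y) {proj : E → E}
    (hprojY : ∀ z, proj z ∈ Y) (hprojnear : ∀ z, ∀ w ∈ Y, ‖z - proj z‖ ≤ ‖z - w‖)
    (z : E) : ∀ w ∈ Y, ⟪z - proj z, w - proj z⟫ ≤ 0 := by
  haveI : Nonempty Y := ⟨⟨proj z, hprojY z⟩⟩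
  have heq : ‖z - proj z‖ = ⨅ w : Y, ‖z - w‖ := by
    apply le_antisymm
    · exact le_ciInf fun w => hprojnear z w w.2
    · have hbdd : BddBelow (Set.range fun w : Y => ‖z - (w : E)‖) := by
        refine ⟨0, ?_⟩
        rintro x ⟨w, rfl⟩
        exact norm_nonneg _
      exact ciInf_le hbdd ⟨proj z, hprojY z⟩
  exact (norm_eq_iInf_iff_real_inner_le_zero hYconv (hprojY z)).mp heq

lemma my_proj_nonexp {Y : Set E} (hYconv : Convex ℝ Y) {proj : E → E}
    (hprojY : ∀ z, proj z ∈ Y) (hprojnear : ∀ z, ∀ w ∈ Y, ‖z - proj z‖ ≤ ‖z - w‖)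
    (a b : E) : ‖proj a - proj b‖ ≤ ‖a - b‖ := by
  have h1 := my_proj_inner hYconv hprojY hprojnear a (proj b) (hprojY b)
  have h2 := my_proj_inner hYconv hprojY hprojnear b (proj a) (hprojY a)
  set P : E := proj a - proj b with hP
  have h1' : ⟪a - proj a, P⟫ ≥ 0 := by
    have : proj b - proj a = -P := by rw [hP]; abel
    rw [this, inner_neg_right] at h1
    linarith
  have h2' : ⟪b - proj b, P⟫ ≤ 0 := h2
  have hkey : ‖P‖ ^ 2 ≤ ⟪a - b, P⟫ := by
    have hsplit : ⟪a - b, P⟫ = ⟪a - proj a, P⟫ + ⟪proj a - proj b, P⟫ + ⟪proj b - b, P⟫ := by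
      rw [← inner_add_left, ← inner_add_left]
      congr 1
      abel
    have h3 : ⟪proj b - b, P⟫ ≥ 0 := by
      have : proj b - b = -(b - proj b) := by abel
      rw [this, inner_neg_left]
      linarith
    have hPP : ⟪proj a - proj b, P⟫ = ‖P‖ ^ 2 := by
      rw [real_inner_self_eq_norm_sq]
    linarith [hsplit, hPP, h1', h3]
  have hub : ⟪a - b, P⟫ ≤ ‖a - b‖ * ‖P‖ := real_inner_le_norm _ _
  nlinarith [norm_nonneg P, norm_nonneg (a - b)]

lemma my_combo_sq {μ : ℝ} (hμ0 : 0 ≤ μ) (hμ1 : μ ≤ 1) (u v : E) :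
    ‖μ • u + (1 - μ) • v‖ ^ 2 ≤ μ * ‖u‖ ^ 2 + (1 - μ) * ‖v‖ ^ 2 := by
  have hexp : ‖μ • u + (1 - μ) • v‖ ^ 2
      = μ ^ 2 * ‖u‖ ^ 2 + 2 * (μ * ((1 - μ) * ⟪u, v⟫)) + (1 - μ) ^ 2 * ‖v‖ ^ 2 := by
    rw [norm_add_sq_real, real_inner_smul_left, real_inner_smul_right, norm_smul, norm_smul,
      mul_pow, mul_pow, Real.norm_eq_abs, Real.norm_eq_abs, sq_abs, sq_abs]
  rw [hexp]
  have hsub : ‖u - v‖ ^ 2 = ‖u‖ ^ 2 - 2 * ⟪u, v⟫ + ‖v‖ ^ 2 := norm_sub_sq_real u v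
  nlinarith [hsub, mul_nonneg hμ0 (by linarith : (0:ℝ) ≤ 1 - μ)]

end helpers2

set_option maxHeartbeats 2000000 in
open scoped RealInnerProductSpace in
theorem stmt6 {m : ℕ}
    (Ψ ψ : EuclideanSpace ℝ (Fin m) → ℝ)
    (Ψ' ψ' : EuclideanSpace ℝ (Fin m) → EuclideanSpace ℝ (Fin m))
    (hΨconv : ConvexOn ℝ univ Ψ) (hψconv : ConvexOn ℝ univ ψ)
    (hΨgrad : ∀ w, HasGradientAt Ψ (Ψ' w) w) (hψgrad : ∀ w, HasGradientAt ψ (ψ' w) w)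
    (LF Lf : ℝ)
    (hΨlip : ∀ a b, ‖Ψ' a - Ψ' b‖ ≤ LF * ‖a - b‖)
    (hψlip : ∀ a b, ‖ψ' a - ψ' b‖ ≤ Lf * ‖a - b‖)
    (Y : Set (EuclideanSpace ℝ (Fin m)))
    (hYne : Y.Nonempty) (hYcpt : IsCompact Y) (hYconv : Convex ℝ Y)
    (su sl μ : ℝ)
    (hsu : su ∈ Ioo 0 (1 / LF)) (hsl : sl ∈ Ioo 0 (1 / Lf)) (hμ : μ ∈ Ioo (0 : ℝ) 1)
    (α : ℕ → ℝ) (hα : ∀ k, α k = 1 / ((k : ℝ) + 1))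
    (βlow cβ : ℝ) (hβlow : 0 < βlow) (hcβ : 0 < cβ)
    (β : ℕ → ℝ) (hβ : ∀ k, β k ∈ Icc βlow 1)
    (hβdiff : ∀ k ≥ 1, |β k - β (k - 1)| ≤ cβ / ((k : ℝ) + 1) ^ 2)
    (proj : EuclideanSpace ℝ (Fin m) → EuclideanSpace ℝ (Fin m))
    (hprojY : ∀ z, proj z ∈ Y)
    (hprojnear : ∀ z, ∀ w ∈ Y, ‖z - proj z‖ ≤ ‖z - w‖)
    (y : ℕ → EuclideanSpace ℝ (Fin m)) (hy0 : y 0 ∈ Y)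
    (hyrec : ∀ k, y (k + 1) =
      proj (y k - ((μ * α k * su) • Ψ' (y k) + ((1 - μ) * β k * sl) • ψ' (y k))))
    (zu zl : ℕ → EuclideanSpace ℝ (Fin m))
    (hzu : ∀ k, zu (k + 1) = y k - (su * α k) • Ψ' (y k))
    (hzl : ∀ k, zl (k + 1) = y k - (sl * β k) • ψ' (y k))
    (D MF Mf : ℝ)
    (hD : D = Metric.diam Y)
    (hMF : MF = ⨆ w : Y, ‖Ψ' w.1‖)
    (hMf : Mf = ⨆ w : Y, ‖ψ' w.1‖) :
    ∀ k ≥ 1,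
      ‖y (k + 1) - y k‖ ^ 2 ≤ ‖y k - y (k - 1)‖ ^ 2
        + (μ / ((k : ℝ) + 1) ^ 2) * ‖y (k - 1) - zu k‖ ^ 2
        + 2 * (1 - μ) * sl * cβ * D * Mf / ((k : ℝ) + 1) ^ 2
        + 2 * μ * su * D * MF / ((k : ℝ) * ((k : ℝ) + 1))
        + ((1 - μ) * cβ ^ 2 / (βlow ^ 2 * ((k : ℝ) + 1) ^ 4)) * ‖y (k - 1) - zl k‖ ^ 2 := by
  intro k hk
  obtain ⟨j, rfl⟩ : ∃ j, k = j + 1 := ⟨k - 1, (Nat.succ_pred_eq_of_pos hk).symm⟩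
  clear hk
  -- positivity facts
  have hLF : 0 < LF := by
    by_contra h
    push_neg at h
    have : 1 / LF ≤ 0 := one_div_nonpos.mpr h
    linarith [hsu.1, hsu.2]
  have hLf : 0 < Lf := by
    by_contra h
    push_neg at h
    have : 1 / Lf ≤ 0 := one_div_nonpos.mpr h
    linarith [hsl.1, hsl.2]
  have hsuLF : su * LF < 1 := (lt_div_iff₀ hLF).mp hsu.2
  have hslLf : sl * Lf < 1 := (lt_div_iff₀ hLf).mp hsl.2
  have hsu0 : 0 < su := hsu.1
  have hsl0 : 0 < sl := hsl.1
  have hβ0 : ∀ n, 0 < β n := fun n => lt_of_lt_of_le hβlow (hβ n).1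
  have hβ1 : ∀ n, β n ≤ 1 := fun n => (hβ n).2
  have hyY : ∀ n, y n ∈ Y := by
    intro n
    cases n with
    | zero => exact hy0
    | succ i => rw [hyrec]; exact hprojY _
  -- bounds via sup
  have hMFb : ∀ w ∈ Y, ‖Ψ' w‖ ≤ MF := by
    intro w hw
    have hlipc : Continuous Ψ' := by
      have : LipschitzWith (Real.toNNReal LF) Ψ' := by
        apply LipschitzWith.of_dist_le_mul
        intro a b
        rw [dist_eq_norm, dist_eq_norm, Real.coe_toNNReal _ (le_of_lt hLF)]
        exact hΨlip a b
      exact this.continuous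
    obtain ⟨C, hC⟩ := hYcpt.exists_bound_of_continuousOn hlipc.continuousOn
    have hbdd : BddAbove (Set.range fun w : Y => ‖Ψ' (w : EuclideanSpace ℝ (Fin m))‖) := by
      refine ⟨C, ?_⟩
      rintro x ⟨w, rfl⟩
      exact hC w w.2
    rw [hMF]
    exact le_ciSup hbdd ⟨w, hw⟩
  have hMfb : ∀ w ∈ Y, ‖ψ' w‖ ≤ Mf := by
    intro w hw
    have hlipc : Continuous ψ' := by
      have : LipschitzWith (Real.toNNReal Lf) ψ' := by
        apply LipschitzWith.of_dist_le_mul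
        intro a b
        rw [dist_eq_norm, dist_eq_norm, Real.coe_toNNReal _ (le_of_lt hLf)]
        exact hψlip a b
      exact this.continuous
    obtain ⟨C, hC⟩ := hYcpt.exists_bound_of_continuousOn hlipc.continuousOn
    have hbdd : BddAbove (Set.range fun w : Y => ‖ψ' (w : EuclideanSpace ℝ (Fin m))‖) := by
      refine ⟨C, ?_⟩
      rintro x ⟨w, rfl⟩
      exact hC w w.2
    rw [hMf]
    exact le_ciSup hbdd ⟨w, hw⟩
  have hMF0 : 0 ≤ MF := le_trans (norm_nonneg _) (hMFb _ (hyY 0))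
  have hMf0 : 0 ≤ Mf := le_trans (norm_nonneg _) (hMfb _ (hyY 0))
  have hDb : ∀ p ∈ Y, ∀ q ∈ Y, ‖p - q‖ ≤ D := by
    intro p hp q hq
    rw [hD, ← dist_eq_norm]
    exact Metric.dist_le_diam_of_mem hYcpt.isBounded hp hq
  have hD0 : 0 ≤ D := hD ▸ Metric.diam_nonneg
  -- real number abbreviations
  set n1 : ℝ := (j : ℝ) + 1 with hn1
  set n2 : ℝ := (j : ℝ) + 2 with hn2
  have hn1p : 0 < n1 := by positivity
  have hn2p : 0 < n2 := by positivity
  have hαj1 : α (j + 1) = 1 / n2 := by rw [hα, hn2]; push_cast; ring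
  have hαj : α j = 1 / n1 := by rw [hα]
  have hα1le : α (j + 1) ≤ 1 := by
    rw [hαj1]
    rw [div_le_one hn2p]
    linarith
  have hα1pos : 0 < α (j + 1) := by rw [hαj1]; positivity
  have hαjpos : 0 < α j := by rw [hαj]; positivity
  -- step maps
  set t : ℝ := su * α (j + 1) with ht
  set t' : ℝ := sl * β (j + 1) with ht'
  have ht0 : 0 ≤ t := le_of_lt (mul_pos hsu0 hα1pos)
  have htL : t * LF ≤ 2 := by
    have : t ≤ su := by
      rw [ht]
      nlinarith [hα1le, hα1pos]
    nlinarith [hsuLF, hLF]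
  have ht'0 : 0 ≤ t' := le_of_lt (mul_pos hsl0 (hβ0 _))
  have ht'L : t' * Lf ≤ 2 := by
    have : t' ≤ sl := by
      rw [ht']
      nlinarith [hβ1 (j + 1), hβ0 (j + 1)]
    nlinarith [hslLf, hLf]
  -- projection representation
  have e1 : y (j + 1 + 1) = proj (μ • zu (j + 1 + 1) + (1 - μ) • zl (j + 1 + 1)) := by
    rw [hyrec (j + 1), hzu (j + 1), hzl (j + 1)]
    exact congrArg proj (by module)
  have e0 : y (j + 1) = proj (μ • zu (j + 1) + (1 - μ) • zl (j + 1)) := by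
    rw [hyrec j, hzu j, hzl j]
    exact congrArg proj (by module)
  have hne : ‖y (j + 1 + 1) - y (j + 1)‖
      ≤ ‖(μ • zu (j + 1 + 1) + (1 - μ) • zl (j + 1 + 1))
          - (μ • zu (j + 1) + (1 - μ) • zl (j + 1))‖ := by
    have := my_proj_nonexp hYconv hprojY hprojnear
      (μ • zu (j + 1 + 1) + (1 - μ) • zl (j + 1 + 1))
      (μ • zu (j + 1) + (1 - μ) • zl (j + 1))
    rwa [← e1, ← e0] at this
  have hdiffrw : (μ • zu (j + 1 + 1) + (1 - μ) • zl (j + 1 + 1))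
      - (μ • zu (j + 1) + (1 - μ) • zl (j + 1))
      = μ • (zu (j + 1 + 1) - zu (j + 1)) + (1 - μ) • (zl (j + 1 + 1) - zl (j + 1)) := by
    module
  set U := zu (j + 1 + 1) - zu (j + 1) with hUdef
  set V := zl (j + 1 + 1) - zl (j + 1) with hVdef
  have hcombo := my_combo_sq (le_of_lt hμ.1) (le_of_lt hμ.2) U V
  have hsq0 : ‖y (j + 1 + 1) - y (j + 1)‖ ^ 2 ≤ μ * ‖U‖ ^ 2 + (1 - μ) * ‖V‖ ^ 2 := by
    calc ‖y (j + 1 + 1) - y (j + 1)‖ ^ 2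
        ≤ ‖μ • U + (1 - μ) • V‖ ^ 2 := by
          rw [← hdiffrw]
          exact pow_le_pow_left₀ (norm_nonneg _) hne 2
      _ ≤ μ * ‖U‖ ^ 2 + (1 - μ) * ‖V‖ ^ 2 := hcombo
  -- decomposition of U
  set Td := (y (j + 1) - t • Ψ' (y (j + 1))) - (y j - t • Ψ' (y j)) with hTd
  set wu := (α (j + 1)) • (y j - zu (j + 1)) with hwu
  have hU : U = Td + wu := by
    rw [hUdef, hTd, hwu, hzu (j + 1), hzu j, ht, hαj1, hαj]
    match_scalars
    any_goals ring
    all_goals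
      have h1 : (1 : ℝ) + (j : ℝ) ≠ 0 := by positivity
      have h2 : (2 : ℝ) + (j : ℝ) ≠ 0 := by positivity
      have h1' : (j : ℝ) + 1 ≠ 0 := by positivity
      have h2' : (j : ℝ) + 2 ≠ 0 := by positivity
      field_simp
      ring
  -- decomposition of V
  set Sd := (y (j + 1) - t' • ψ' (y (j + 1))) - (y j - t' • ψ' (y j)) with hSd
  set wv := (sl * (β j - β (j + 1))) • ψ' (y j) with hwv
  have hV : V = Sd + wv := by
    rw [hVdef, hSd, hwv, hzl (j + 1), hzl j, ht']
    module
  -- norm bounds for Td, Sd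
  have hTnon : ‖Td‖ ≤ ‖y (j + 1) - y j‖ :=
    my_step_nonexp hLF hΨconv hΨgrad hΨlip ht0 htL _ _
  have hSnon : ‖Sd‖ ≤ ‖y (j + 1) - y j‖ :=
    my_step_nonexp hLf hψconv hψgrad hψlip ht'0 ht'L _ _
  have hyD : ‖y (j + 1) - y j‖ ≤ D := hDb _ (hyY _) _ (hyY _)
  have hTdD : ‖Td‖ ≤ D := le_trans hTnon hyD
  have hSdD : ‖Sd‖ ≤ D := le_trans hSnon hyD
  -- norms of the perturbation terms
  have hzuval : y j - zu (j + 1) = (su * α j) • Ψ' (y j) := by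
    rw [hzu j]; abel
  have hzlval : y j - zl (j + 1) = (sl * β j) • ψ' (y j) := by
    rw [hzl j]; abel
  have hwu_norm : ‖wu‖ = (1 / n2) * ‖y j - zu (j + 1)‖ := by
    rw [hwu, norm_smul, hαj1, Real.norm_eq_abs, abs_of_pos (by positivity)]
  have hzu_norm : ‖y j - zu (j + 1)‖ ≤ su * (1 / n1) * MF := by
    rw [hzuval, norm_smul, Real.norm_eq_abs, hαj, abs_of_pos (by positivity)]
    exact mul_le_mul_of_nonneg_left (hMFb _ (hyY j)) (by positivity)
  have hwu_le : ‖wu‖ ≤ (1 / n2) * (su * (1 / n1) * MF) := by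
    rw [hwu_norm]
    apply mul_le_mul_of_nonneg_left hzu_norm (by positivity)
  -- beta difference
  have hbd : |β j - β (j + 1)| ≤ cβ / n2 ^ 2 := by
    have := hβdiff (j + 1) (Nat.le_add_left 1 j)
    rw [Nat.add_sub_cancel] at this
    rw [abs_sub_comm]
    have hcast : ((j + 1 : ℕ) : ℝ) + 1 = n2 := by push_cast; ring
    rwa [hcast] at this
  have hwv_le : ‖wv‖ ≤ sl * (cβ / n2 ^ 2) * Mf := by
    rw [hwv, norm_smul, Real.norm_eq_abs, abs_mul, abs_of_pos hsl0]
    have hg := hMfb _ (hyY j)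
    have hg0 : (0 : ℝ) ≤ ‖ψ' (y j)‖ := norm_nonneg _
    have h1 : sl * |β j - β (j + 1)| ≤ sl * (cβ / n2 ^ 2) :=
      mul_le_mul_of_nonneg_left hbd (le_of_lt hsl0)
    exact mul_le_mul h1 hg hg0 (by positivity)
  have hwv_sq : ‖wv‖ ^ 2 ≤ (cβ ^ 2 / (βlow ^ 2 * n2 ^ 4)) * ‖y j - zl (j + 1)‖ ^ 2 := by
    have hkey : ‖wv‖ ≤ (cβ / (βlow * n2 ^ 2)) * ‖y j - zl (j + 1)‖ := by
      rw [hwv, hzlval, norm_smul, norm_smul, Real.norm_eq_abs, Real.norm_eq_abs,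
        abs_mul, abs_of_pos hsl0, abs_of_pos (mul_pos hsl0 (hβ0 j))]
      have hg0 : (0 : ℝ) ≤ ‖ψ' (y j)‖ := norm_nonneg _
      have hβj : βlow ≤ β j := (hβ j).1
      have hfrac : |β j - β (j + 1)| ≤ (cβ / (βlow * n2 ^ 2)) * β j := by
        have h1 : cβ / (βlow * n2 ^ 2) * βlow ≤ cβ / (βlow * n2 ^ 2) * β j :=
          mul_le_mul_of_nonneg_left hβj (by positivity)
        have h2 : cβ / (βlow * n2 ^ 2) * βlow = cβ / n2 ^ 2 := by
          field_simp
        linarith [hbd, h1, h2]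
      have hmul := mul_le_mul_of_nonneg_right
        (mul_le_mul_of_nonneg_left hfrac (le_of_lt hsl0)) hg0
      nlinarith [hmul]
    have h2 := pow_le_pow_left₀ (norm_nonneg wv) hkey 2
    calc ‖wv‖ ^ 2 ≤ ((cβ / (βlow * n2 ^ 2)) * ‖y j - zl (j + 1)‖) ^ 2 := h2
      _ = (cβ ^ 2 / (βlow ^ 2 * n2 ^ 4)) * ‖y j - zl (j + 1)‖ ^ 2 := by
        rw [mul_pow, div_pow, show (βlow * n2 ^ 2) ^ 2 = βlow ^ 2 * n2 ^ 4 from by ring]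
  -- squared bound for U
  have hU2 : ‖U‖ ^ 2 ≤ ‖y (j + 1) - y j‖ ^ 2 + 2 * su * D * MF / (n1 * n2)
      + (1 / n2 ^ 2) * ‖y j - zu (j + 1)‖ ^ 2 := by
    have hnU : ‖U‖ ≤ ‖Td‖ + ‖wu‖ := by rw [hU]; exact norm_add_le _ _
    have hsq : ‖U‖ ^ 2 ≤ (‖Td‖ + ‖wu‖) ^ 2 :=
      pow_le_pow_left₀ (norm_nonneg _) hnU 2
    have hexp : (‖Td‖ + ‖wu‖) ^ 2 = ‖Td‖ ^ 2 + 2 * (‖Td‖ * ‖wu‖) + ‖wu‖ ^ 2 := by ring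
    have hTd2 : ‖Td‖ ^ 2 ≤ ‖y (j + 1) - y j‖ ^ 2 :=
      pow_le_pow_left₀ (norm_nonneg _) hTnon 2
    have hcross : ‖Td‖ * ‖wu‖ ≤ D * ((1 / n2) * (su * (1 / n1) * MF)) :=
      mul_le_mul hTdD hwu_le (norm_nonneg _) hD0
    have hwu2 : ‖wu‖ ^ 2 = (1 / n2 ^ 2) * ‖y j - zu (j + 1)‖ ^ 2 := by
      rw [hwu_norm, mul_pow, div_pow, one_pow]
    have hring : 2 * (D * ((1 / n2) * (su * (1 / n1) * MF))) = 2 * su * D * MF / (n1 * n2) := by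
      rw [hn1, hn2]
      have h1 : (j : ℝ) + 1 ≠ 0 := by positivity
      have h2 : (j : ℝ) + 2 ≠ 0 := by positivity
      field_simp
    linarith [hsq, hexp ▸ hsq, hTd2, hcross, hwu2, hring]
  -- squared bound for V
  have hV2 : ‖V‖ ^ 2 ≤ ‖y (j + 1) - y j‖ ^ 2 + 2 * sl * cβ * D * Mf / n2 ^ 2
      + (cβ ^ 2 / (βlow ^ 2 * n2 ^ 4)) * ‖y j - zl (j + 1)‖ ^ 2 := by
    have hnV : ‖V‖ ≤ ‖Sd‖ + ‖wv‖ := by rw [hV]; exact norm_add_le _ _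
    have hsq : ‖V‖ ^ 2 ≤ (‖Sd‖ + ‖wv‖) ^ 2 :=
      pow_le_pow_left₀ (norm_nonneg _) hnV 2
    have hexp : (‖Sd‖ + ‖wv‖) ^ 2 = ‖Sd‖ ^ 2 + 2 * (‖Sd‖ * ‖wv‖) + ‖wv‖ ^ 2 := by ring
    have hSd2 : ‖Sd‖ ^ 2 ≤ ‖y (j + 1) - y j‖ ^ 2 :=
      pow_le_pow_left₀ (norm_nonneg _) hSnon 2
    have hcross : ‖Sd‖ * ‖wv‖ ≤ D * (sl * (cβ / n2 ^ 2) * Mf) :=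
      mul_le_mul hSdD hwv_le (norm_nonneg _) hD0
    have hring : 2 * (D * (sl * (cβ / n2 ^ 2) * Mf)) = 2 * sl * cβ * D * Mf / n2 ^ 2 := by
      ring
    linarith [hsq, hexp ▸ hsq, hSd2, hcross, hwv_sq, hring]
  -- combine
  have hμ0 : 0 ≤ μ := le_of_lt hμ.1
  have hμ1 : 0 ≤ 1 - μ := by linarith [hμ.2]
  have hfin : ‖y (j + 1 + 1) - y (j + 1)‖ ^ 2
      ≤ μ * (‖y (j + 1) - y j‖ ^ 2 + 2 * su * D * MF / (n1 * n2)
          + (1 / n2 ^ 2) * ‖y j - zu (j + 1)‖ ^ 2)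
        + (1 - μ) * (‖y (j + 1) - y j‖ ^ 2 + 2 * sl * cβ * D * Mf / n2 ^ 2
          + (cβ ^ 2 / (βlow ^ 2 * n2 ^ 4)) * ‖y j - zl (j + 1)‖ ^ 2) := by
    have h1 := mul_le_mul_of_nonneg_left hU2 hμ0
    have h2 := mul_le_mul_of_nonneg_left hV2 hμ1
    linarith [hsq0]
  simp only [Nat.add_sub_cancel]
  push_cast
  rw [hn1, hn2] at hfin
  calc ‖y (j + 1 + 1) - y (j + 1)‖ ^ 2
      ≤ μ * (‖y (j + 1) - y j‖ ^ 2 + 2 * su * D * MF / (((j : ℝ) + 1) * ((j : ℝ) + 2))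
          + (1 / ((j : ℝ) + 2) ^ 2) * ‖y j - zu (j + 1)‖ ^ 2)
        + (1 - μ) * (‖y (j + 1) - y j‖ ^ 2 + 2 * sl * cβ * D * Mf / ((j : ℝ) + 2) ^ 2
          + (cβ ^ 2 / (βlow ^ 2 * ((j : ℝ) + 2) ^ 4)) * ‖y j - zl (j + 1)‖ ^ 2) := hfin
    _ = ‖y (j + 1) - y j‖ ^ 2
        + μ / (((j : ℝ) + 1) + 1) ^ 2 * ‖y j - zu (j + 1)‖ ^ 2
        + 2 * (1 - μ) * sl * cβ * D * Mf / (((j : ℝ) + 1) + 1) ^ 2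
        + 2 * μ * su * D * MF / (((j : ℝ) + 1) * (((j : ℝ) + 1) + 1))
        + (1 - μ) * cβ ^ 2 / (βlow ^ 2 * (((j : ℝ) + 1) + 1) ^ 4) * ‖y j - zl (j + 1)‖ ^ 2 := by
      have h1 : (j : ℝ) + 1 ≠ 0 := by positivity
      have h2 : (j : ℝ) + 1 + 1 ≠ 0 := by positivity
      have h3 : (j : ℝ) + 2 ≠ 0 := by positivity
      have h4 : βlow ≠ 0 := ne_of_gt hβlow
      field_simp
      ring
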